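/- In the ILT model, for t > 0 the Wiener index satisfies W(G_t) = 4^t·(W(G_0) + (e_0 + n_0)·(1 − (3/4)^t)). -/

import Mathlib

open SimpleGraph Finset

universe u
variable {V : Type u}

/-- One step of the Iterated Local Transitivity model: every vertex `x` gets a
clone `Sum.inr x` joined to `x` and all of its neighbours; old vertices are `Sum.inl`. -/
def ILTstep (G : SimpleGraph V) : SimpleGraph (V ⊕ V) where
  Adj a b := match a, b with
    | Sum.inl x, Sum.inl y => G.Adj x y
    | Sum.inl x, Sum.inr y => x = y ∨ G.Adj x y
    | Sum.inr x, Sum.inl y => x = y ∨ G.Adj x y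
    | Sum.inr _, Sum.inr _ => False
  symm := by
    constructor
    rintro (x | x) (y | y) h
    · exact (h : G.Adj x y).symm
    · exact h.imp Eq.symm (fun hh => hh.symm)
    · exact h.imp Eq.symm (fun hh => hh.symm)
    · exact h.elim
  loopless := by
    constructor
    rintro (x | x) h
    · exact (h : G.Adj x x).ne rfl
    · exact h

instance ILTstepDecAdj (G : SimpleGraph V) [DecidableEq V] [DecidableRel G.Adj] :
    DecidableRel (ILTstep G).Adj := fun a b =>
  match a, b with
  | Sum.inl x, Sum.inl y => inferInstanceAs (Decidable (G.Adj x y))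
  | Sum.inl x, Sum.inr y => inferInstanceAs (Decidable (x = y ∨ G.Adj x y))
  | Sum.inr x, Sum.inl y => inferInstanceAs (Decidable (x = y ∨ G.Adj x y))
  | Sum.inr _, Sum.inr _ => inferInstanceAs (Decidable False)

/-- The vertex set of the ILT model at time `t`. -/
def ILTV (V : Type u) : ℕ → Type u
  | 0 => V
  | t + 1 => ILTV V t ⊕ ILTV V t

/-- The graph of the ILT model at time `t`, starting from `G`. -/
def ILTG (G : SimpleGraph V) : (t : ℕ) → SimpleGraph (ILTV V t)
  | 0 => G
  | t + 1 => ILTstep (ILTG G t)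

instance ILTVFintype [Fintype V] : ∀ t, Fintype (ILTV V t)
  | 0 => inferInstanceAs (Fintype V)
  | t + 1 => letI := ILTVFintype t
             inferInstanceAs (Fintype (ILTV V t ⊕ ILTV V t))

instance ILTVDecEq [DecidableEq V] : ∀ t, DecidableEq (ILTV V t)
  | 0 => inferInstanceAs (DecidableEq V)
  | t + 1 => letI := ILTVDecEq t
             inferInstanceAs (DecidableEq (ILTV V t ⊕ ILTV V t))

instance ILTGDecAdj (G : SimpleGraph V) [DecidableEq V] [DecidableRel G.Adj] :
    ∀ t, DecidableRel (ILTG G t).Adj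
  | 0 => inferInstanceAs (DecidableRel G.Adj)
  | t + 1 => letI : DecidableEq (ILTV V t) := ILTVDecEq t
             letI : DecidableRel (ILTG G t).Adj := ILTGDecAdj G t
             ILTstepDecAdj (ILTG G t)

/-- The volume of a graph: the sum of the degrees of its vertices. -/
def graphVol [Fintype V] (G : SimpleGraph V) [DecidableRel G.Adj] : ℕ :=
  ∑ v, G.degree v

/-- The Wiener index: the sum of distances over unordered pairs of vertices. -/
noncomputable def wienerIndex [Fintype V] (G : SimpleGraph V) : ℕ :=
  (∑ x : V, ∑ y : V, G.dist x y) / 2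

namespace ILTaux
open SimpleGraph Finset

variable {V : Type u} (G : SimpleGraph V)

/-- The inclusion of old vertices is a graph homomorphism. -/
def homInl : G →g ILTstep G where
  toFun := Sum.inl
  map_rel' := fun h => h

def proj : V ⊕ V → V := Sum.elim id id

lemma proj_adj {a b : V ⊕ V} (h : (ILTstep G).Adj a b) :
    proj a = proj b ∨ G.Adj (proj a) (proj b) := by
  rcases a with x | x <;> rcases b with y | y
  · exact Or.inr h
  · exact h
  · exact h
  · exact h.elim

lemma dist_proj_le (hG : G.Connected) {a b : V ⊕ V} (w : (ILTstep G).Walk a b) :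
    G.dist (proj a) (proj b) ≤ w.length := by
  induction w with
  | nil => simp
  | @cons a c b h w ih =>
    rcases proj_adj G h with heq | hadj
    · rw [Walk.length_cons, heq]
      exact ih.trans (Nat.le_succ _)
    · calc G.dist (proj a) (proj b) ≤ G.dist (proj a) (proj c) + G.dist (proj c) (proj b) :=
            hG.dist_triangle
        _ ≤ 1 + w.length := Nat.add_le_add (SimpleGraph.dist_le hadj.toWalk) ih
        _ = w.length + 1 := Nat.add_comm _ _
        _ = (Walk.cons h w).length := (Walk.length_cons _ _).symm

lemma exists_walk_inl_inr {x y : V} (w : G.Walk x y) (hw : 0 < w.length) :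
    ∃ w' : (ILTstep G).Walk (Sum.inl x) (Sum.inr y), w'.length = w.length := by
  induction w with
  | nil => simp at hw
  | @cons a c b h w ih =>
    rcases Nat.eq_zero_or_pos w.length with h0 | hpos
    · have hcb : c = b := Walk.eq_of_length_eq_zero h0
      subst hcb
      exact ⟨.cons (show (ILTstep G).Adj (Sum.inl a) (Sum.inr c) from Or.inr h) .nil,
        by simp [h0]⟩
    · obtain ⟨w', hw'⟩ := ih hpos
      exact ⟨.cons (show (ILTstep G).Adj (Sum.inl a) (Sum.inl c) from h) w', by simp [hw']⟩

lemma adj_inl_inr (x : V) : (ILTstep G).Adj (Sum.inl x) (Sum.inr x) := Or.inl rfl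

lemma dist_inl_inl (hG : G.Connected) (x y : V) :
    (ILTstep G).dist (Sum.inl x) (Sum.inl y) = G.dist x y := by
  obtain ⟨w, hw⟩ := hG.exists_walk_length_eq_dist x y
  have hr : (ILTstep G).Reachable (Sum.inl x) (Sum.inl y) := ⟨w.map (homInl G)⟩
  obtain ⟨w', hw'⟩ := hr.exists_walk_length_eq_dist
  refine le_antisymm ?_ ?_
  · calc (ILTstep G).dist (Sum.inl x) (Sum.inl y) ≤ (w.map (homInl G)).length :=
        SimpleGraph.dist_le _
      _ = G.dist x y := by rw [Walk.length_map, hw]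
  · calc G.dist x y = G.dist (proj (Sum.inl x)) (proj (Sum.inl y)) := rfl
      _ ≤ w'.length := dist_proj_le G hG w'
      _ = _ := hw'

lemma dist_inl_inr [DecidableEq V] (hG : G.Connected) (x y : V) :
    (ILTstep G).dist (Sum.inl x) (Sum.inr y) = if x = y then 1 else G.dist x y := by
  split_ifs with hxy
  · subst hxy
    exact SimpleGraph.dist_eq_one_iff_adj.mpr (adj_inl_inr G x)
  · obtain ⟨w, hw⟩ := hG.exists_walk_length_eq_dist x y
    have hpos : 0 < w.length := by
      rw [hw]; exact hG.pos_dist_of_ne hxy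
    obtain ⟨w1, hw1⟩ := exists_walk_inl_inr G w hpos
    have hr : (ILTstep G).Reachable (Sum.inl x) (Sum.inr y) := ⟨w1⟩
    obtain ⟨w', hw'⟩ := hr.exists_walk_length_eq_dist
    refine le_antisymm ?_ ?_
    · calc (ILTstep G).dist (Sum.inl x) (Sum.inr y) ≤ w1.length := SimpleGraph.dist_le _
        _ = G.dist x y := by rw [hw1, hw]
    · calc G.dist x y = G.dist (proj (Sum.inl x)) (proj (Sum.inr y)) := rfl
        _ ≤ w'.length := dist_proj_le G hG w'
        _ = _ := hw'

lemma dist_inr_inr [DecidableEq V] (hG : G.Connected) (x y : V) :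
    (ILTstep G).dist (Sum.inr x) (Sum.inr y)
      = if x = y then 0 else max 2 (G.dist x y) := by
  split_ifs with hxy
  · subst hxy; exact SimpleGraph.dist_self
  -- upper bound: construct a walk of length `max 2 (G.dist x y)`
  have hub : (ILTstep G).dist (Sum.inr x) (Sum.inr y) ≤ max 2 (G.dist x y) ∧
      (ILTstep G).Reachable (Sum.inr x) (Sum.inr y) := by
    by_cases hadj : G.Adj x y
    · have hd1 : G.dist x y = 1 := SimpleGraph.dist_eq_one_iff_adj.mpr hadj
      refine ⟨?_, ⟨.cons (show (ILTstep G).Adj (Sum.inr x) (Sum.inl y) from Or.inr hadj)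
          (.cons (adj_inl_inr G y) .nil)⟩⟩
      have hle := SimpleGraph.dist_le
        (.cons (show (ILTstep G).Adj (Sum.inr x) (Sum.inl y) from Or.inr hadj)
          (.cons (adj_inl_inr G y) .nil))
      simp only [Walk.length_cons, Walk.length_nil] at hle
      rw [hd1]
      exact hle.trans (by norm_num)
    · obtain ⟨w, hw⟩ := hG.exists_walk_length_eq_dist x y
      have hd2 : 2 ≤ G.dist x y := by
        have h1 : G.dist x y ≠ 1 := fun h => hadj (SimpleGraph.dist_eq_one_iff_adj.mp h)
        have h0 : 0 < G.dist x y := hG.pos_dist_of_ne hxy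
        omega
      obtain ⟨v, h1, w1, rfl⟩ := Walk.exists_eq_cons_of_ne hxy w
      · 
        have hlen : 0 < w1.length := by
          simp only [Walk.length_cons] at hw; omega
        obtain ⟨w1', hw1'⟩ := exists_walk_inl_inr G w1 hlen
        refine ⟨?_, ⟨.cons (show (ILTstep G).Adj (Sum.inr x) (Sum.inl v) from Or.inr h1) w1'⟩⟩
        have hle := SimpleGraph.dist_le
          (.cons (show (ILTstep G).Adj (Sum.inr x) (Sum.inl v) from Or.inr h1) w1')
        rw [Walk.length_cons, hw1'] at hle
        simp only [Walk.length_cons] at hw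
        have h3 : w1.length + 1 = G.dist x y := hw
        linarith [le_max_right 2 (G.dist x y)]
  obtain ⟨hub, hr⟩ := hub
  refine le_antisymm hub (max_le ?_ ?_)
  · -- dist ≥ 2 : vertices distinct and not adjacent
    have hne : (Sum.inr x : V ⊕ V) ≠ Sum.inr y := fun h => hxy (Sum.inr.inj h)
    have h0 : 0 < (ILTstep G).dist (Sum.inr x) (Sum.inr y) := hr.pos_dist_of_ne hne
    have h1 : (ILTstep G).dist (Sum.inr x) (Sum.inr y) ≠ 1 := by
      intro h
      exact (SimpleGraph.dist_eq_one_iff_adj.mp h : False)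
    omega
  · obtain ⟨w', hw'⟩ := hr.exists_walk_length_eq_dist
    calc G.dist x y = G.dist (proj (Sum.inr x)) (proj (Sum.inr y)) := rfl
      _ ≤ w'.length := dist_proj_le G hG w'
      _ = _ := hw'

lemma iltstep_connected (hG : G.Connected) : (ILTstep G).Connected := by
  rw [connected_iff]
  refine ⟨?_, ⟨Sum.inl hG.nonempty.some⟩⟩
  have key : ∀ a : V ⊕ V, (ILTstep G).Reachable a (Sum.inl (proj a)) := by
    rintro (x | x)
    · exact Reachable.refl _
    · exact ((adj_inl_inr G x).reachable).symm
  intro a b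
  refine (key a).trans (Reachable.trans ?_ (key b).symm)
  exact Reachable.map (homInl G) (hG (proj a) (proj b))


lemma dist_inr_inl [DecidableEq V] (hG : G.Connected) (x y : V) :
    (ILTstep G).dist (Sum.inr x) (Sum.inl y) = if y = x then 1 else G.dist x y := by
  rw [SimpleGraph.dist_comm, dist_inl_inr G hG]
  by_cases h : y = x <;> simp [h, SimpleGraph.dist_comm]

lemma even_double_sum {α : Type*} (s : Finset α) (f : α → α → ℕ)
    (hsym : ∀ x y, f x y = f y x) (hdiag : ∀ x, f x x = 0) :
    Even (∑ x ∈ s, ∑ y ∈ s, f x y) := by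
  classical
  induction s using Finset.induction_on with
  | empty => simp
  | @insert a s ha ih =>
    rw [Finset.sum_insert ha, Finset.sum_insert ha]
    have h1 : ∀ x ∈ s, (∑ y ∈ insert a s, f x y) = f x a + ∑ y ∈ s, f x y :=
      fun x _ => Finset.sum_insert ha
    rw [Finset.sum_congr rfl h1, Finset.sum_add_distrib, hdiag a]
    have h2 : (∑ x ∈ s, f x a) = ∑ x ∈ s, f a x :=
      Finset.sum_congr rfl (fun x _ => hsym x a)
    rw [h2]
    have h3 : (0 + ∑ y ∈ s, f a y + (∑ x ∈ s, f a x + ∑ x ∈ s, ∑ y ∈ s, f x y))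
        = 2 * (∑ y ∈ s, f a y) + ∑ x ∈ s, ∑ y ∈ s, f x y := by ring
    rw [h3]
    exact (even_two_mul _).add ih

lemma two_mul_wiener [Fintype V] (G : SimpleGraph V) :
    2 * wienerIndex G = ∑ x : V, ∑ y : V, G.dist x y := by
  obtain ⟨k, hk⟩ := even_double_sum Finset.univ (fun x y => G.dist x y)
    (fun x y => SimpleGraph.dist_comm) (fun x => SimpleGraph.dist_self)
  unfold wienerIndex
  omega

lemma degree_eq_sum [Fintype V] [DecidableEq V] (G : SimpleGraph V) [DecidableRel G.Adj]
    (v : V) : G.degree v = ∑ y : V, if G.Adj v y then 1 else 0 := by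
  simp [SimpleGraph.degree, neighborFinset_eq_filter, Finset.sum_boole]

lemma double_sum_step [Fintype V] [DecidableEq V] (G : SimpleGraph V) [DecidableRel G.Adj]
    (hG : G.Connected) :
    (∑ a : V ⊕ V, ∑ b : V ⊕ V, (ILTstep G).dist a b)
      = 4 * (∑ x : V, ∑ y : V, G.dist x y) + 2 * Fintype.card V + graphVol G := by
  have hpt1 : ∀ x y : V, (if x = y then 1 else G.dist x y)
      = G.dist x y + (if x = y then 1 else 0) := by
    intro x y; by_cases h : x = y <;> simp [h, SimpleGraph.dist_self]
  have hpt1' : ∀ x y : V, (if y = x then 1 else G.dist x y)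
      = G.dist x y + (if y = x then 1 else 0) := by
    intro x y; by_cases h : y = x <;> simp [h, SimpleGraph.dist_self]
  have hpt2 : ∀ x y : V, (if x = y then 0 else max 2 (G.dist x y))
      = G.dist x y + (if G.Adj x y then 1 else 0) := by
    intro x y
    by_cases h : x = y
    · subst h; simp [SimpleGraph.dist_self]
    · by_cases hadj : G.Adj x y
      · rw [if_neg h, SimpleGraph.dist_eq_one_iff_adj.mpr hadj, if_pos hadj]; rfl
      · have hd2 : 2 ≤ G.dist x y := by
          have hp := hG.pos_dist_of_ne h
          have h1 : G.dist x y ≠ 1 := fun hh => hadj (SimpleGraph.dist_eq_one_iff_adj.mp hh)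
          omega
        rw [if_neg h, max_eq_right hd2, if_neg hadj, add_zero]
  simp only [Fintype.sum_sum_type, dist_inl_inl G hG, dist_inl_inr G hG, dist_inr_inl G hG,
    dist_inr_inr G hG, hpt1, hpt1', hpt2, Finset.sum_add_distrib]
  have hs1 : ∀ x : V, (∑ y : V, if x = y then 1 else 0) = 1 := by
    intro x; simp
  have hs1' : ∀ x : V, (∑ y : V, if y = x then 1 else 0) = 1 := by
    intro x; simp
  have hs2 : ∀ x : V, (∑ y : V, if G.Adj x y then 1 else 0) = G.degree x := by
    intro x; rw [degree_eq_sum]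
  simp only [hs1, hs1', hs2, Finset.sum_const, Finset.card_univ, smul_eq_mul, mul_one]
  unfold graphVol
  ring

lemma graphVol_step [Fintype V] [DecidableEq V] (G : SimpleGraph V) [DecidableRel G.Adj] :
    graphVol (ILTstep G) = 3 * graphVol G + 2 * Fintype.card V := by
  have hdeg : ∀ a : V ⊕ V, (ILTstep G).degree a
      = ∑ b : V ⊕ V, if (ILTstep G).Adj a b then 1 else 0 := degree_eq_sum _
  have hpt : ∀ x y : V, (if (x = y ∨ G.Adj x y) then 1 else 0)
      = (if G.Adj x y then 1 else 0) + (if x = y then 1 else 0) := by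
    intro x y
    by_cases h : x = y
    · subst h; simp
    · by_cases hadj : G.Adj x y <;> simp [h, hadj]
  unfold graphVol
  simp only [hdeg, Fintype.sum_sum_type]
  have e1 : ∀ x y : V, (if (ILTstep G).Adj (Sum.inl x) (Sum.inl y) then 1 else 0)
      = (if G.Adj x y then (1:ℕ) else 0) := fun x y => rfl
  have e2 : ∀ x y : V, (if (ILTstep G).Adj (Sum.inl x) (Sum.inr y) then 1 else 0)
      = (if (x = y ∨ G.Adj x y) then (1:ℕ) else 0) := fun x y => rfl
  have e3 : ∀ x y : V, (if (ILTstep G).Adj (Sum.inr x) (Sum.inl y) then 1 else 0)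
      = (if (x = y ∨ G.Adj x y) then (1:ℕ) else 0) := fun x y => rfl
  have e4 : ∀ x y : V, (if (ILTstep G).Adj (Sum.inr x) (Sum.inr y) then 1 else 0)
      = (0:ℕ) := fun x y => rfl
  simp only [e1, e2, e3, e4, hpt, Finset.sum_add_distrib, Finset.sum_const_zero, add_zero]
  have hs1 : ∀ x : V, (∑ y : V, if x = y then 1 else 0) = 1 := by intro x; simp
  have hs2 : ∀ x : V, (∑ y : V, if G.Adj x y then 1 else 0) = G.degree x :=
    fun x => (degree_eq_sum G x).symm
  simp only [hs1, hs2, Finset.sum_add_distrib, Finset.sum_const, Finset.card_univ,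
    smul_eq_mul, mul_one]
  ring


lemma ILTG_connected [Fintype V] (G : SimpleGraph V) (hG : G.Connected) :
    ∀ t, (ILTG G t).Connected
  | 0 => hG
  | t + 1 => iltstep_connected _ (ILTG_connected G hG t)

lemma card_ILTV (V : Type u) [Fintype V] (t : ℕ) :
    Fintype.card (ILTV V (t+1)) = 2 * Fintype.card (ILTV V t) := by
  have h : Fintype.card (ILTV V t ⊕ ILTV V t) = 2 * Fintype.card (ILTV V t) := by
    rw [Fintype.card_sum]; ring
  exact h

lemma vol_card_formula [Fintype V] [DecidableEq V] (G : SimpleGraph V) [DecidableRel G.Adj]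
    (t : ℕ) :
    graphVol (ILTG G t) + 2 * Fintype.card (ILTV V t)
      = 3 ^ t * (graphVol G + 2 * Fintype.card V) := by
  induction t with
  | zero => simp [ILTG, ILTV]; rfl
  | succ t ih =>
    have h1 : graphVol (ILTG G (t+1))
        = 3 * graphVol (ILTG G t) + 2 * Fintype.card (ILTV V t) :=
      graphVol_step (ILTG G t)
    have h2 := card_ILTV V t
    calc graphVol (ILTG G (t+1)) + 2 * Fintype.card (ILTV V (t+1))
        = 3 * (graphVol (ILTG G t) + 2 * Fintype.card (ILTV V t)) := by rw [h1, h2]; ring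
      _ = 3 ^ (t+1) * (graphVol G + 2 * Fintype.card V) := by rw [ih, pow_succ]; ring

lemma wiener_formula [Fintype V] [DecidableEq V] (G : SimpleGraph V) [DecidableRel G.Adj]
    (hG : G.Connected) (t : ℕ) :
    (wienerIndex (ILTG G t) : ℚ)
      = 4 ^ t * (wienerIndex G : ℚ)
        + ((4:ℚ) ^ t - 3 ^ t) * ((G.edgeFinset.card : ℚ) + (Fintype.card V : ℚ)) := by
  induction t with
  | zero => simp [ILTG]; rfl
  | succ t ih =>
    have h2W : 2 * wienerIndex (ILTG G (t+1))
        = 4 * (∑ x : ILTV V t, ∑ y : ILTV V t, (ILTG G t).dist x y)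
          + 2 * Fintype.card (ILTV V t) + graphVol (ILTG G t) := by
      rw [two_mul_wiener]
      exact double_sum_step (ILTG G t) (ILTG_connected G hG t)
    rw [← two_mul_wiener] at h2W
    have hvc := vol_card_formula G t
    have hvol0 : graphVol G = 2 * G.edgeFinset.card := by
      simpa [graphVol] using G.sum_degrees_eq_twice_card_edges
    have hQ1 : (2:ℚ) * (wienerIndex (ILTG G (t+1)) : ℚ)
        = 4 * (2 * (wienerIndex (ILTG G t) : ℚ)) + 2 * (Fintype.card (ILTV V t) : ℚ)
          + (graphVol (ILTG G t) : ℚ) := by exact_mod_cast h2W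
    have hQ2 : (graphVol (ILTG G t) : ℚ) + 2 * (Fintype.card (ILTV V t) : ℚ)
        = 3 ^ t * ((graphVol G : ℚ) + 2 * (Fintype.card V : ℚ)) := by exact_mod_cast hvc
    have hQ3 : (graphVol G : ℚ) = 2 * (G.edgeFinset.card : ℚ) := by exact_mod_cast hvol0
    have h4 : ((4:ℚ) ^ (t+1)) = 4 * 4 ^ t := by ring
    have h3 : ((3:ℚ) ^ (t+1)) = 3 * 3 ^ t := by ring
    rw [h4, h3]
    linear_combination (1/2) * hQ1 + (1/2) * hQ2 + 4 * ih + ((3:ℚ) ^ t / 2) * hQ3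

end ILTaux

theorem ILT_wiener_formula [Fintype V] [DecidableEq V]
    (G : SimpleGraph V) [DecidableRel G.Adj] (hG : G.Connected) (t : ℕ) (ht : 0 < t) :
    (wienerIndex (ILTG G t) : ℚ)
      = 4 ^ t * ((wienerIndex G : ℚ)
          + ((G.edgeFinset.card : ℚ) + (Fintype.card V : ℚ)) * (1 - (3 / 4) ^ t)) := by
  rw [ILTaux.wiener_formula G hG t]
  have h34 : ((3:ℚ) / 4) ^ t = 3 ^ t / 4 ^ t := div_pow 3 4 t
  have h4 : ((4:ℚ)) ^ t ≠ 0 := by positivity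
  rw [h34]
  field_simp
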